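/- Let P be a j-Sing graded poset of rank d+1 with d even. Then 2·e_P(0̂,1̂) = -∑_{1 ≤ ρ(t) ≤ j} e_P(t,1̂) - ∑_{d-j+1 ≤ ρ(t) ≤ d} e_P(0̂,t). If instead d is odd, then ∑_{1 ≤ ρ(t) ≤ j} e_P(t,1̂) = ∑_{d-j+1 ≤ ρ(t) ≤ d} e_P(0̂,t). -/

import Mathlib

open Finset

variable {α : Type*} [Fintype α] [PartialOrder α] [BoundedOrder α] [DecidableEq α]
  [DecidableRel ((· ≤ ·) : α → α → Prop)]

/-- `ρ` is a rank function making `α` a graded poset of rank `d + 1`. -/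
def IsGraded (ρ : α → ℕ) (d : ℕ) : Prop :=
  ρ ⊥ = 0 ∧ ρ ⊤ = d + 1 ∧ (∀ a b : α, a ⋖ b → ρ b = ρ a + 1) ∧
    ∀ a b : α, a < b → ρ a < ρ b

/-- `mu` is the Möbius function of the poset `α`. -/
def IsMobius (mu : α → α → ℤ) : Prop :=
  (∀ a : α, mu a a = 1) ∧
    ∀ a b : α, a < b → ∑ c ∈ Finset.univ.filter (fun c => a ≤ c ∧ c ≤ b), mu a c = 0

/-- `JSing ρ mu n s t` says that the interval `[s, t]` is `(n-1)`-Sing: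
`JSing 0` is Eulerian (all subintervals have Möbius value `(-1)^length`),
`JSing 1` is semi-Eulerian, and `JSing (n+1)` requires every strictly shorter
subinterval to be `JSing n`. -/
def JSing (ρ : α → ℕ) (mu : α → α → ℤ) : ℕ → α → α → Prop
  | 0 => fun s t => ∀ a b : α, s ≤ a → a ≤ b → b ≤ t → mu a b = (-1 : ℤ) ^ (ρ b - ρ a)
  | n + 1 => fun s t => ∀ a b : α, s ≤ a → a ≤ b → b ≤ t →
      ρ b - ρ a < ρ t - ρ s → JSing ρ mu n a b

lemma rank_mono {ρ : α → ℕ} {d : ℕ} (hgr : IsGraded ρ d) {x y : α} (h : x ≤ y) :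
    ρ x ≤ ρ y := by
  rcases lt_or_eq_of_le h with h' | h'
  · exact (hgr.2.2.2 _ _ h').le
  · rw [h']

lemma exists_rank_down {ρ : α → ℕ} {d : ℕ} (hgr : IsGraded ρ d) :
    ∀ k : ℕ, ∀ s a : α, s ≤ a → ∀ r : ℕ, ρ s ≤ r → r ≤ ρ a → ρ a - r ≤ k →
      ∃ c, s ≤ c ∧ c ≤ a ∧ ρ c = r := by
  classical
  intro k
  induction k with
  | zero => intro s a hsa r h1 h2 h3; exact ⟨a, hsa, le_rfl, by omega⟩
  | succ k ih =>
    intro s a hsa r h1 h2 h3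
    by_cases hr : ρ a = r
    · exact ⟨a, hsa, le_rfl, hr⟩
    · have hlt : s < a := by
        rcases lt_or_eq_of_le hsa with h | h
        · exact h
        · exfalso; rw [h] at h1; omega
      obtain ⟨c', hc'le, hc'max⟩ :=
        Finset.exists_le_maximal (univ.filter fun x => s ≤ x ∧ x < a)
          (by simp [hlt] : s ∈ _)
      have hc'mem : s ≤ c' ∧ c' < a := by simpa using hc'max.1
      have hcov : c' ⋖ a := by
        refine ⟨hc'mem.2, fun y hy1 hy2 => ?_⟩
        have : y ≤ c' := hc'max.2 (by simp [hc'mem.1.trans hy1.le, hy2]) hy1.le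
        exact hy1.not_ge this
      have hρ : ρ a = ρ c' + 1 := hgr.2.2.1 _ _ hcov
      obtain ⟨c, h1', h2', h3'⟩ := ih s c' hc'mem.1 r h1 (by omega) (by omega)
      exact ⟨c, h1', h2'.trans hc'mem.2.le, h3'⟩

lemma exists_rank_up {ρ : α → ℕ} {d : ℕ} (hgr : IsGraded ρ d) :
    ∀ k : ℕ, ∀ b t : α, b ≤ t → ∀ r : ℕ, ρ b ≤ r → r ≤ ρ t → r - ρ b ≤ k →
      ∃ c, b ≤ c ∧ c ≤ t ∧ ρ c = r := by
  classical
  intro k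
  induction k with
  | zero => intro b t hbt r h1 h2 h3; exact ⟨b, le_rfl, hbt, by omega⟩
  | succ k ih =>
    intro b t hbt r h1 h2 h3
    by_cases hr : ρ b = r
    · exact ⟨b, le_rfl, hbt, hr⟩
    · have hlt : b < t := by
        rcases lt_or_eq_of_le hbt with h | h
        · exact h
        · exfalso; rw [h] at h1 hr; omega
      obtain ⟨c', hc'le, hc'min⟩ :=
        Finset.exists_le_minimal (univ.filter fun x => b < x ∧ x ≤ t)
          (by simp [hlt] : t ∈ _)
      have hc'mem : b < c' ∧ c' ≤ t := by simpa using hc'min.1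
      have hcov : b ⋖ c' := by
        refine ⟨hc'mem.1, fun y hy1 hy2 => ?_⟩
        have : c' ≤ y := hc'min.2 (by simp [hy1, hy2.le.trans hc'mem.2]) hy2.le
        exact hy2.not_ge this
      have hρ : ρ c' = ρ b + 1 := hgr.2.2.1 _ _ hcov
      obtain ⟨c, h1', h2', h3'⟩ := ih c' t hc'mem.2 r (by omega) h2 (by omega)
      exact ⟨c, hc'mem.1.le.trans h1', h2', h3'⟩


lemma jsing_eulerian {ρ : α → ℕ} {d : ℕ} {mu : α → α → ℤ} (hgr : IsGraded ρ d) :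
    ∀ n : ℕ, ∀ s t a b : α, JSing ρ mu n s t → s ≤ a → a ≤ b → b ≤ t →
      ρ b - ρ a + n ≤ ρ t - ρ s → mu a b = (-1 : ℤ) ^ (ρ b - ρ a) := by
  intro n
  induction n with
  | zero => intro s t a b hs h1 h2 h3 _; exact hs a b h1 h2 h3
  | succ n ih =>
    intro s t a b hs h1 h2 h3 h4
    have m1 : ρ s ≤ ρ a := rank_mono hgr h1
    have m2 : ρ a ≤ ρ b := rank_mono hgr h2
    have m3 : ρ b ≤ ρ t := rank_mono hgr h3
    set p := min n (ρ a - ρ s) with hp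
    obtain ⟨a', ha1, ha2, ha3⟩ :=
      exists_rank_down hgr p s a h1 (ρ a - p) (by omega) (by omega) (by omega)
    obtain ⟨b', hb1, hb2, hb3⟩ :=
      exists_rank_up hgr (n - p) b t h3 (ρ b + (n - p)) (by omega) (by omega) (by omega)
    have hj : JSing ρ mu n a' b' :=
      hs a' b' ha1 (ha2.trans (h2.trans hb1)) hb2 (by omega)
    exact ih a' b' a b hj ha2 h2 hb1 (by omega)

lemma mobius_colsum {ρ : α → ℕ} {d : ℕ} {mu : α → α → ℤ}
    (hgr : IsGraded ρ d) (hmu : IsMobius mu) :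
    ∀ a b : α, a < b → ∑ c ∈ univ.filter (fun c => a ≤ c ∧ c ≤ b), mu c b = 0 := by
  suffices H : ∀ n : ℕ, ∀ a b : α, a < b → ρ b - ρ a ≤ n →
      ∑ c ∈ univ.filter (fun c => a ≤ c ∧ c ≤ b), mu c b = 0 by
    exact fun a b h => H (ρ b - ρ a) a b h le_rfl
  intro n
  induction n with
  | zero =>
    intro a b hab hle
    have := hgr.2.2.2 a b hab
    omega
  | succ n ih =>
    intro a b hab hle
    have hIaa : ∀ z : α, univ.filter (fun c => z ≤ c ∧ c ≤ z) = {z} := by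
      intro z
      ext x
      simp only [mem_filter, mem_univ, true_and, mem_singleton]
      exact ⟨fun ⟨u1, u2⟩ => le_antisymm u2 u1, fun h => ⟨h.ge, h.le⟩⟩
    have swap : (∑ c ∈ univ.filter (fun c => a ≤ c ∧ c ≤ b),
          ∑ x ∈ univ.filter (fun x => c ≤ x ∧ x ≤ b), mu a c * mu x b)
        = ∑ x ∈ univ.filter (fun x => a ≤ x ∧ x ≤ b),
            ∑ c ∈ univ.filter (fun c => a ≤ c ∧ c ≤ x), mu a c * mu x b := by
      refine Finset.sum_comm' fun c x => ?_
      simp only [mem_filter, mem_univ, true_and]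
      exact ⟨fun ⟨⟨u1, u2⟩, u3, u4⟩ => ⟨⟨u1, u3⟩, u1.trans u3, u4⟩,
        fun ⟨⟨u1, u3⟩, _, u4⟩ => ⟨⟨u1, u3.trans u4⟩, u3, u4⟩⟩
    have rval : (∑ x ∈ univ.filter (fun x => a ≤ x ∧ x ≤ b),
          ∑ c ∈ univ.filter (fun c => a ≤ c ∧ c ≤ x), mu a c * mu x b) = mu a b := by
      rw [Finset.sum_eq_single_of_mem a (by simp [hab.le])]
      · rw [hIaa a, Finset.sum_singleton, hmu.1, one_mul]
      · intro x hx hxa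
        simp only [mem_filter, mem_univ, true_and] at hx
        rw [← Finset.sum_mul, hmu.2 a x (lt_of_le_of_ne hx.1 (Ne.symm hxa)), zero_mul]
    have lval : (∑ c ∈ univ.filter (fun c => a ≤ c ∧ c ≤ b),
          ∑ x ∈ univ.filter (fun x => c ≤ x ∧ x ≤ b), mu a c * mu x b)
        = (∑ x ∈ univ.filter (fun x => a ≤ x ∧ x ≤ b), mu x b) + mu a b := by
      have step : ∀ c ∈ univ.filter (fun c => a ≤ c ∧ c ≤ b),
          (∑ x ∈ univ.filter (fun x => c ≤ x ∧ x ≤ b), mu a c * mu x b)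
          = (if c = a then (∑ x ∈ univ.filter (fun x => a ≤ x ∧ x ≤ b), mu x b) else 0)
            + (if c = b then mu a b else 0) := by
        intro c hc
        simp only [mem_filter, mem_univ, true_and] at hc
        rw [← Finset.mul_sum]
        by_cases hca : c = a
        · subst hca
          rw [hmu.1, one_mul, if_pos rfl, if_neg hab.ne, add_zero]
        · by_cases hcb : c = b
          · subst hcb
            rw [hIaa c, Finset.sum_singleton, hmu.1, mul_one, if_neg hca, if_pos rfl,
              zero_add]
          · have hac : a < c := lt_of_le_of_ne hc.1 (Ne.symm hca)
            have hcb' : c < b := lt_of_le_of_ne hc.2 hcb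
            have hm := hgr.2.2.2 a c hac
            have hm2 := hgr.2.2.2 a b hab
            rw [ih c b hcb' (by omega), mul_zero, if_neg hca, if_neg hcb, add_zero]
      rw [Finset.sum_congr rfl step, Finset.sum_add_distrib,
        Finset.sum_ite_eq' _ a (fun _ => ∑ x ∈ univ.filter (fun x => a ≤ x ∧ x ≤ b), mu x b),
        Finset.sum_ite_eq' _ b (fun _ => mu a b),
        if_pos (by simp [hab.le] : a ∈ _), if_pos (by simp [hab.le] : b ∈ _)]
    have := lval ▸ (swap.trans rval)
    linarith

/-- error relations for a `j`-Sing poset of rank `d+1`: writing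
`e(s,t) = μ(s,t) - (-1)^{ρ(t)-ρ(s)}`, if `d` is even then
`2·e(0̂,1̂) = -∑_{1 ≤ ρ(t) ≤ j} e(t,1̂) - ∑_{d-j+1 ≤ ρ(t) ≤ d} e(0̂,t)`,
and if `d` is odd then `∑_{1 ≤ ρ(t) ≤ j} e(t,1̂) = ∑_{d-j+1 ≤ ρ(t) ≤ d} e(0̂,t)`. -/
theorem jSing_error_relations (d : ℕ) (ρ : α → ℕ) (mu : α → α → ℤ)
    (hgr : IsGraded ρ d) (hmu : IsMobius mu)
    (j : ℤ) (hj : -1 ≤ j) (hjd : j ≤ d)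
    (hsing : JSing ρ mu (j + 1).toNat ⊥ ⊤) :
    (Even d →
      2 * (mu ⊥ ⊤ - (-1 : ℤ) ^ (d + 1)) =
        -∑ t ∈ Finset.univ.filter (fun t : α => 1 ≤ ρ t ∧ (ρ t : ℤ) ≤ j),
            (mu t ⊤ - (-1 : ℤ) ^ (ρ ⊤ - ρ t))
        - ∑ t ∈ Finset.univ.filter (fun t : α => (d : ℤ) - j + 1 ≤ (ρ t : ℤ) ∧ ρ t ≤ d),
            (mu ⊥ t - (-1 : ℤ) ^ (ρ t - ρ ⊥))) ∧
    (Odd d →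
      ∑ t ∈ Finset.univ.filter (fun t : α => 1 ≤ ρ t ∧ (ρ t : ℤ) ≤ j),
          (mu t ⊤ - (-1 : ℤ) ^ (ρ ⊤ - ρ t))
        = ∑ t ∈ Finset.univ.filter (fun t : α => (d : ℤ) - j + 1 ≤ (ρ t : ℤ) ∧ ρ t ≤ d),
            (mu ⊥ t - (-1 : ℤ) ^ (ρ t - ρ ⊥))) := by

  have hbot : ρ (⊥ : α) = 0 := hgr.1
  have htop : ρ (⊤ : α) = d + 1 := hgr.2.1
  have hrub : ∀ a : α, ρ a ≤ d + 1 := fun a => htop ▸ rank_mono hgr (le_top : a ≤ ⊤)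
  have hbotlt : (⊥ : α) < ⊤ := by
    rcases lt_or_eq_of_le (bot_le : (⊥ : α) ≤ ⊤) with h | h
    · exact h
    · exfalso; rw [h, htop] at hbot; omega
  have htopeq : ∀ a : α, ρ a = d + 1 → a = ⊤ := by
    intro a h
    rcases lt_or_eq_of_le (le_top : a ≤ ⊤) with h' | h'
    · have := hgr.2.2.2 _ _ h'; rw [h, htop] at this; omega
    · exact h'
  have hboteq : ∀ a : α, ρ a = 0 → a = ⊥ := by
    intro a h
    rcases lt_or_eq_of_le (bot_le : (⊥ : α) ≤ a) with h' | h'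
    · have := hgr.2.2.2 _ _ h'; rw [h, hbot] at this; omega
    · exact h'.symm
  -- Eulerian vanishing for short intervals
  have hval : ∀ a b : α, a ≤ b → (ρ b : ℤ) ≤ (ρ a : ℤ) + (d : ℤ) - j →
      mu a b = (-1 : ℤ) ^ (ρ b - ρ a) := by
    intro a b hab hcond
    refine jsing_eulerian hgr _ ⊥ ⊤ a b hsing bot_le hab le_top ?_
    have h1 := rank_mono hgr hab
    have h2 := hrub a
    have h3 := hrub b
    rw [hbot, htop]
    omega
  have hfiltuniv : (univ.filter fun c : α => ⊥ ≤ c ∧ c ≤ ⊤) = univ :=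
    Finset.filter_true_of_mem fun x _ => ⟨bot_le, le_top⟩
  have hrow : ∑ a : α, mu ⊥ a = 0 := by
    have h := hmu.2 ⊥ ⊤ hbotlt
    rwa [hfiltuniv] at h
  have hcol : ∑ a : α, mu a ⊤ = 0 := by
    have h := mobius_colsum hgr hmu ⊥ ⊤ hbotlt
    rwa [hfiltuniv] at h
  set E1 : ℤ := ∑ t ∈ Finset.univ.filter (fun t : α => 1 ≤ ρ t ∧ (ρ t : ℤ) ≤ j),
      (mu t ⊤ - (-1 : ℤ) ^ (ρ ⊤ - ρ t)) with hE1
  set E2 : ℤ := ∑ t ∈ Finset.univ.filter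
      (fun t : α => (d : ℤ) - j + 1 ≤ (ρ t : ℤ) ∧ ρ t ≤ d),
      (mu ⊥ t - (-1 : ℤ) ^ (ρ t - ρ ⊥)) with hE2
  set e : ℤ := mu ⊥ ⊤ - (-1 : ℤ) ^ (d + 1) with he
  set K : ℤ := ∑ a : α, (-1 : ℤ) ^ (ρ a) with hK
  -- row equation
  have hrow2 : K + (E2 + e) = 0 := by
    have hterm : ∀ a : α, mu ⊥ a
        = (-1 : ℤ) ^ (ρ a) + (mu ⊥ a - (-1 : ℤ) ^ (ρ a - ρ ⊥)) := by
      intro a; rw [hbot, Nat.sub_zero]; ring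
    have hsplit := Finset.sum_filter_add_sum_filter_not Finset.univ
      (fun a : α => (d : ℤ) - j + 1 ≤ (ρ a : ℤ) ∧ ρ a ≤ d)
      (fun a : α => mu ⊥ a - (-1 : ℤ) ^ (ρ a - ρ ⊥))
    have hrest : ∑ a ∈ Finset.univ.filter
        (fun a : α => ¬((d : ℤ) - j + 1 ≤ (ρ a : ℤ) ∧ ρ a ≤ d)),
        (mu ⊥ a - (-1 : ℤ) ^ (ρ a - ρ ⊥)) = e := by
      rw [Finset.sum_eq_single_of_mem (⊤ : α)]
      · rw [he, hbot, htop, Nat.sub_zero]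
      · simp only [mem_filter, mem_univ, true_and, not_and, not_le]
        intro _; rw [htop]; omega
      · intro x hx hxne
        simp only [mem_filter, mem_univ, true_and, not_and, not_le] at hx
        by_cases hc : (ρ x : ℤ) ≤ (d : ℤ) - j
        · rw [hval ⊥ x bot_le (by rw [hbot]; push_cast; omega)]
          ring
        · exfalso
          have h1 : (d : ℤ) - j + 1 ≤ (ρ x : ℤ) := by omega
          have h2 := hx h1
          have h3 := hrub x
          exact hxne (htopeq x (by omega))
    calc K + (E2 + e)
        = (∑ a : α, (-1 : ℤ) ^ (ρ a)) + ∑ a : α, (mu ⊥ a - (-1 : ℤ) ^ (ρ a - ρ ⊥)) := by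
          rw [← hsplit, hrest, hK, hE2]; try ring
      _ = ∑ a : α, mu ⊥ a := by
          rw [← Finset.sum_add_distrib]
          exact Finset.sum_congr rfl fun a _ => (hterm a).symm
      _ = 0 := hrow
  -- column equation
  have hcol2 : (-1 : ℤ) ^ (d + 1) * K + (E1 + e) = 0 := by
    have hterm : ∀ a : α, mu a ⊤
        = (-1 : ℤ) ^ (d + 1) * (-1 : ℤ) ^ (ρ a) + (mu a ⊤ - (-1 : ℤ) ^ (ρ ⊤ - ρ a)) := by
      intro a
      have h1 : ρ a ≤ d + 1 := hrub a
      have hsq : ((-1 : ℤ)) ^ (ρ a) * (-1 : ℤ) ^ (ρ a) = 1 := by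
        rw [← pow_add]; exact Even.neg_one_pow ⟨ρ a, rfl⟩
      have h2 : ((-1 : ℤ)) ^ (ρ ⊤ - ρ a) = (-1 : ℤ) ^ (d + 1) * (-1 : ℤ) ^ (ρ a) := by
        calc ((-1 : ℤ)) ^ (ρ ⊤ - ρ a)
            = (-1 : ℤ) ^ (ρ ⊤ - ρ a) * ((-1 : ℤ) ^ (ρ a) * (-1 : ℤ) ^ (ρ a)) := by
              rw [hsq, mul_one]
          _ = ((-1 : ℤ) ^ (ρ ⊤ - ρ a + ρ a)) * (-1 : ℤ) ^ (ρ a) := by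
              rw [pow_add]; ring
          _ = (-1 : ℤ) ^ (d + 1) * (-1 : ℤ) ^ (ρ a) := by
              rw [htop]
              congr 2
              omega
      rw [← h2]; ring
    have hsplit := Finset.sum_filter_add_sum_filter_not Finset.univ
      (fun a : α => 1 ≤ ρ a ∧ (ρ a : ℤ) ≤ j)
      (fun a : α => mu a ⊤ - (-1 : ℤ) ^ (ρ ⊤ - ρ a))
    have hrest : ∑ a ∈ Finset.univ.filter
        (fun a : α => ¬(1 ≤ ρ a ∧ (ρ a : ℤ) ≤ j)),
        (mu a ⊤ - (-1 : ℤ) ^ (ρ ⊤ - ρ a)) = e := by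
      rw [Finset.sum_eq_single_of_mem (⊥ : α)]
      · rw [he, hbot, htop, Nat.sub_zero]
      · simp only [mem_filter, mem_univ, true_and, not_and, not_le]
        intro h1; rw [hbot] at h1; omega
      · intro x hx hxne
        simp only [mem_filter, mem_univ, true_and, not_and, not_le] at hx
        by_cases hc : 1 ≤ ρ x
        · have h1 : j < (ρ x : ℤ) := hx hc
          have h3 := hrub x
          rw [hval x ⊤ le_top (by rw [htop]; push_cast; omega)]
          ring
        · exact absurd (hboteq x (by omega)) hxne
    calc (-1 : ℤ) ^ (d + 1) * K + (E1 + e)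
        = (∑ a : α, (-1 : ℤ) ^ (d + 1) * (-1 : ℤ) ^ (ρ a))
          + ∑ a : α, (mu a ⊤ - (-1 : ℤ) ^ (ρ ⊤ - ρ a)) := by
          rw [← hsplit, hrest, hK, hE1, Finset.mul_sum]; try ring
      _ = ∑ a : α, mu a ⊤ := by
          rw [← Finset.sum_add_distrib]
          exact Finset.sum_congr rfl fun a _ => (hterm a).symm
      _ = 0 := hcol
  constructor
  · intro hd
    have hpow : (-1 : ℤ) ^ (d + 1) = -1 := Odd.neg_one_pow (Even.add_one hd)
    rw [hpow] at hcol2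
    linarith
  · intro hd
    have hpow : (-1 : ℤ) ^ (d + 1) = 1 := Even.neg_one_pow (Odd.add_one hd)
    rw [hpow] at hcol2
    linarith
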